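/- For every n ≥ 0, the interval [m_n, M_n] is forward invariant under the return map Q: if m_n ≤ x ≤ M_n then m_n ≤ Q(x) ≤ M_n. Consequently the interval [m*, M*], where m* = lim m_n and M* = lim M_n, is also forward invariant under Q. -/

import Mathlib

open Real Set Filter

/-- Each interval [m_n, M_n] is forward invariant under Q, and consequently so is [m*, M*]. -/
theorem stmt12
    (a : ℝ) (ha : a < 0) (Φ F : ℝ → ℝ)
    (hΦc : ContinuousOn Φ (Set.Ici 0)) (hFc : ContinuousOn F (Set.Ici 0))
    (Φ₁ Φ₂ F₁ F₂ : ℝ) (hΦ₁ : 0 < Φ₁) (hF₁ : 0 < F₁)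
    (hΦb : ∀ x : ℝ, 0 ≤ x → Φ₁ ≤ Φ x ∧ Φ x ≤ Φ₂)
    (hFb : ∀ x : ℝ, 0 ≤ x → F₁ ≤ F x ∧ F x ≤ F₂)
    (Q : ℝ → ℝ) (hQ : ∀ x : ℝ, Q x = Real.exp (a * Φ x) * (x + F x))
    (hΦm : MonotoneOn Φ (Set.Ici 0)) (hFm : AntitoneOn F (Set.Ici 0))
    (Ψ : ℝ → ℝ)
    (hΨ : ∀ x : ℝ, Ψ x = F x * Real.exp (a * Φ x) / (1 - Real.exp (a * Φ x)))
    (m : ℕ → ℝ) (hm0 : m 0 = 0) (hmrec : ∀ n : ℕ, m (n + 1) = Ψ (Ψ (m n))) :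
    (∀ n : ℕ, ∀ x ∈ Set.Icc (m n) (Ψ (m n)), Q x ∈ Set.Icc (m n) (Ψ (m n))) ∧
    (∀ mstar Mstar : ℝ,
      Filter.Tendsto m Filter.atTop (nhds mstar) →
      Filter.Tendsto (fun n : ℕ => Ψ (m n)) Filter.atTop (nhds Mstar) →
      ∀ x ∈ Set.Icc mstar Mstar, Q x ∈ Set.Icc mstar Mstar) := by
  -- abbreviation
  set e : ℝ → ℝ := fun x => Real.exp (a * Φ x) with he_def
  have he_pos : ∀ x : ℝ, 0 < e x := fun x => Real.exp_pos _
  have he_lt : ∀ x : ℝ, 0 ≤ x → e x < 1 := by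
    intro x hx
    have h1 : 0 < Φ x := lt_of_lt_of_le hΦ₁ (hΦb x hx).1
    have : a * Φ x < 0 := mul_neg_of_neg_of_pos ha h1
    simpa [he_def] using Real.exp_lt_one_iff.mpr this
  have hΨ_pos : ∀ x : ℝ, 0 ≤ x → 0 < Ψ x := by
    intro x hx
    rw [hΨ]
    have hF : 0 < F x := lt_of_lt_of_le hF₁ (hFb x hx).1
    have h1 : 0 < 1 - e x := by linarith [he_lt x hx]
    exact div_pos (mul_pos hF (he_pos x)) h1
  -- monotonicity of e
  have he_mono : ∀ x y : ℝ, 0 ≤ x → x ≤ y → e y ≤ e x := by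
    intro x y hx hxy
    have : Φ x ≤ Φ y := hΦm hx (le_trans hx hxy) hxy
    exact Real.exp_le_exp.mpr (by nlinarith)
  -- Ψ is antitone on [0, ∞)
  have hΨ_anti : ∀ x y : ℝ, 0 ≤ x → x ≤ y → Ψ y ≤ Ψ x := by
    intro x y hx hxy
    have hy : (0:ℝ) ≤ y := le_trans hx hxy
    rw [hΨ, hΨ]
    have hFx : 0 < F x := lt_of_lt_of_le hF₁ (hFb x hx).1
    have hFy : 0 < F y := lt_of_lt_of_le hF₁ (hFb y hy).1
    have hFxy : F y ≤ F x := hFm hx hy hxy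
    have hex : 0 < 1 - e x := by linarith [he_lt x hx]
    have hey : 0 < 1 - e y := by linarith [he_lt y hy]
    have heyx : e y ≤ e x := he_mono x y hx hxy
    have hdiv : e y / (1 - e y) ≤ e x / (1 - e x) := by
      rw [div_le_div_iff₀ hey hex]
      nlinarith [he_pos x, he_pos y]
    have h1 : F y * e y / (1 - e y) = F y * (e y / (1 - e y)) := by ring
    have h2 : F x * e x / (1 - e x) = F x * (e x / (1 - e x)) := by ring
    rw [h1, h2]
    exact mul_le_mul hFxy hdiv (div_nonneg (he_pos y).le hey.le) hFx.le
  -- key identity : Q x = e x * x + (1 - e x) * Ψ x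
  have hQid : ∀ x : ℝ, 0 ≤ x → Q x = e x * x + (1 - e x) * Ψ x := by
    intro x hx
    have h1 : 1 - e x ≠ 0 := by
      have := he_lt x hx; linarith
    rw [hQ, hΨ]
    simp only [he_def] at h1 ⊢
    field_simp
  -- invariant structure of the sequences
  have P : ∀ n : ℕ, 0 ≤ m n ∧ m n ≤ Ψ (m n) ∧ m n ≤ m (n + 1) := by
    intro n
    induction n with
    | zero =>
      refine ⟨le_of_eq hm0.symm, ?_, ?_⟩
      · rw [hm0]; exact (hΨ_pos 0 le_rfl).le
      · rw [hmrec 0, hm0]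
        exact le_of_eq (hm0.symm) |>.trans
          (by rw [hm0]; exact (hΨ_pos _ (hΨ_pos 0 le_rfl).le).le)
    | succ n ih =>
      obtain ⟨h0, h1, h2⟩ := ih
      have h0' : 0 ≤ m (n + 1) := le_trans h0 h2
      -- m (n+1) ≤ Ψ (m n)
      have hA : m (n + 1) ≤ Ψ (m n) := by
        rw [hmrec n]; exact hΨ_anti (m n) (Ψ (m n)) h0 h1
      -- m (n+1) ≤ Ψ (m (n+1))
      have h1' : m (n + 1) ≤ Ψ (m (n + 1)) := by
        have := hΨ_anti (m (n + 1)) (Ψ (m n)) h0' hA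
        rwa [← hmrec n] at this
      -- m (n+1) ≤ m (n+2)
      have h2' : m (n + 1) ≤ m (n + 2) := by
        rw [hmrec n, hmrec (n + 1)]
        exact hΨ_anti (Ψ (m (n + 1))) (Ψ (m n)) (hΨ_pos _ h0').le
          (hΨ_anti (m n) (m (n + 1)) h0 h2)
      exact ⟨h0', h1', h2'⟩
  -- invariance of each interval
  have inv : ∀ n : ℕ, ∀ x ∈ Set.Icc (m n) (Ψ (m n)), Q x ∈ Set.Icc (m n) (Ψ (m n)) := by
    intro n x hx
    obtain ⟨h0, h1, h2⟩ := P n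
    obtain ⟨hxl, hxr⟩ := hx
    have hx0 : (0:ℝ) ≤ x := le_trans h0 hxl
    have hQx := hQid x hx0
    have hepos := he_pos x
    have helt := he_lt x hx0
    -- Ψ x ≤ Ψ (m n)
    have hΨxM : Ψ x ≤ Ψ (m n) := hΨ_anti (m n) x h0 hxl
    -- m n ≤ Ψ x
    have hmΨx : m n ≤ Ψ x := by
      have h3 : Ψ (Ψ (m n)) ≤ Ψ x := hΨ_anti x (Ψ (m n)) hx0 hxr
      have h4 : m n ≤ Ψ (Ψ (m n)) := by rw [← hmrec n]; exact h2
      exact le_trans h4 h3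
    constructor
    · rw [hQx]; nlinarith
    · rw [hQx]; nlinarith
  refine ⟨inv, ?_⟩
  intro mstar Mstar hmt hMt x hx
  have hmono : Monotone m := monotone_nat_of_le_succ fun n => (P n).2.2
  have hanti : Antitone (fun n : ℕ => Ψ (m n)) :=
    antitone_nat_of_succ_le fun n =>
      hΨ_anti (m n) (m (n + 1)) (P n).1 (P n).2.2
  have hm_le : ∀ n : ℕ, m n ≤ mstar := fun n => hmono.ge_of_tendsto hmt n
  have hM_ge : ∀ n : ℕ, Mstar ≤ Ψ (m n) := fun n => hanti.le_of_tendsto hMt n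
  have hxin : ∀ n : ℕ, x ∈ Set.Icc (m n) (Ψ (m n)) := fun n =>
    ⟨le_trans (hm_le n) hx.1, le_trans hx.2 (hM_ge n)⟩
  have hQxin : ∀ n : ℕ, Q x ∈ Set.Icc (m n) (Ψ (m n)) := fun n => inv n x (hxin n)
  constructor
  · exact le_of_tendsto' hmt fun n => (hQxin n).1
  · exact ge_of_tendsto' hMt fun n => (hQxin n).2
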